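/- Let a > 0 be real, p ≥ 1 an integer, and c, M real numbers with 0 ≤ M < c. Then ∫_0^∞ v^{a−1} e^{−cv} ₁F₁(p, a; Mv) dv = Γ(a) c^{p−a} (c−M)^{−p}. -/

import Mathlib

open Real MeasureTheory

/-- Pochhammer symbol `(a)_m = a(a+1)⋯(a+m-1)`. -/
noncomputable def poch (a : ℝ) (m : ℕ) : ℝ := (ascPochhammer ℝ m).eval a

/-- Confluent hypergeometric function `₁F₁(a, c; z)`. -/
noncomputable def oneF1 (a c z : ℝ) : ℝ :=
  ∑' m : ℕ, poch a m / poch c m * z ^ m / (Nat.factorial m)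

/-- Gegenbauer (ultraspherical) polynomial `C_j^{(k)}(x)`. -/
noncomputable def geg (j : ℕ) (k x : ℝ) : ℝ :=
  ∑ l ∈ Finset.range (j / 2 + 1),
    (-1 : ℝ) ^ l * poch k (j - l) / ((Nat.factorial l : ℝ) * (Nat.factorial (j - 2 * l))) *
      (2 * x) ^ (j - 2 * l)

/-- Integral over the standard simplex `Σ_p` in the coordinates `(u_1, …, u_{p-1})`,
with `u_p := 1 - u_1 - ⋯ - u_{p-1}`. -/
noncomputable def simplexIntegral (p : ℕ) (f : (Fin p → ℝ) → ℝ) : ℝ :=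
  ∫ u in {u : Fin (p - 1) → ℝ | (∀ s, 0 ≤ u s) ∧ ∑ s, u s ≤ 1},
    f (fun i => if h : (i : ℕ) < p - 1 then u ⟨i, h⟩ else 1 - ∑ s, u s)

lemma poch_zero' (a : ℝ) : poch a 0 = 1 := by simp [poch]

lemma poch_succ' (a : ℝ) (m : ℕ) : poch a (m + 1) = poch a m * (a + m) := by
  simp [poch, ascPochhammer_succ_right, Polynomial.eval_mul]

lemma poch_pos {a : ℝ} (ha : 0 < a) (m : ℕ) : 0 < poch a m := by
  induction m with
  | zero => simp [poch_zero']
  | succ m ih =>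
    rw [poch_succ']
    have : (0:ℝ) ≤ m := Nat.cast_nonneg m
    positivity

lemma Gamma_add_nat' {a : ℝ} (ha : 0 < a) (m : ℕ) :
    Real.Gamma (a + m) = poch a m * Real.Gamma a := by
  induction m with
  | zero => simp [poch_zero']
  | succ m ih =>
    have hm : (0:ℝ) ≤ m := Nat.cast_nonneg m
    have h : a + ((m : ℕ) + 1 : ℕ) = (a + m) + 1 := by push_cast; ring
    rw [h, Real.Gamma_add_one (by positivity), ih, poch_succ']; ring

lemma poch_nat_eq (q m : ℕ) :
    poch ((q + 1 : ℕ) : ℝ) m = (m.factorial : ℝ) * ((m + q).choose q : ℝ) := by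
  rw [poch, ← Nat.cast_ascFactorial, Nat.ascFactorial_eq_factorial_mul_choose]
  rw [show (q + m).choose m = (m + q).choose q by rw [Nat.add_comm q m]; exact Nat.choose_symm_add]
  push_cast; ring

theorem stmt7 (a : ℝ) (ha : 0 < a) (p : ℕ) (hp : 1 ≤ p) (c M : ℝ) (hM : 0 ≤ M) (hMc : M < c) :
    ∫ v in Set.Ioi (0 : ℝ), v ^ (a - 1) * Real.exp (-c * v) * oneF1 p a (M * v) =
      Real.Gamma a * c ^ ((p : ℝ) - a) * (c - M) ^ (-(p : ℝ)) := by
  have hc : 0 < c := lt_of_le_of_lt hM hMc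
  have hcM : 0 < c - M := by linarith
  set x : ℝ := M / c with hxdef
  have hx0 : 0 ≤ x := div_nonneg hM hc.le
  have hx1 : x < 1 := (div_lt_one hc).2 hMc
  have hx' : ‖x‖ < 1 := by rwa [Real.norm_eq_abs, abs_of_nonneg hx0]
  obtain ⟨q, rfl⟩ : ∃ q, p = q + 1 := ⟨p - 1, (Nat.succ_pred_eq_of_pos hp).symm⟩
  have hppos : (0:ℝ) < ((q+1:ℕ):ℝ) := by positivity
  set s : ℕ → ℝ := fun m => poch ((q+1:ℕ):ℝ) m / poch a m * M ^ m / m.factorial with hs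
  set F : ℕ → ℝ → ℝ := fun m v => s m * (v ^ (a + m - 1) * Real.exp (-(c * v))) with hF
  have hs_nonneg : ∀ m, 0 ≤ s m := by
    intro m
    have h1 := poch_pos ha m
    have h2 : 0 < poch ((q+1:ℕ):ℝ) m := poch_pos hppos m
    have h3 : (0:ℝ) < m.factorial := by exact_mod_cast m.factorial_pos
    simp only [hs]
    positivity
  -- integrability of each term
  have hint : ∀ m : ℕ, IntegrableOn (fun v : ℝ => v ^ (a + m - 1) * Real.exp (-(c * v)))
      (Set.Ioi 0) := by
    intro m
    have hm : (0:ℝ) ≤ m := Nat.cast_nonneg m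
    have h := integrableOn_rpow_mul_exp_neg_mul_rpow (p := 1) (s := a + m - 1) (b := c)
      (by linarith) zero_lt_one hc
    apply h.congr_fun ?_ measurableSet_Ioi
    intro v hv
    simp [Real.rpow_one, neg_mul]
  have hFint : ∀ m, Integrable (F m) (volume.restrict (Set.Ioi 0)) := by
    intro m
    exact ((hint m).const_mul (s m))
  -- value of each integral
  have hval : ∀ m : ℕ, (∫ v in Set.Ioi (0:ℝ), F m v)
      = Real.Gamma a * (1/c) ^ a * (((m + q).choose q : ℝ) * x ^ m) := by
    intro m
    have hm : (0:ℝ) ≤ m := Nat.cast_nonneg m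
    have h1 : 0 < a + m := by linarith
    have hFm : (∫ v in Set.Ioi (0:ℝ), F m v)
        = s m * ∫ v in Set.Ioi (0:ℝ), v ^ (a + m - 1) * Real.exp (-(c * v)) :=
      integral_const_mul _ _
    rw [hFm, show a + (m:ℝ) - 1 = (a + m) - 1 by ring,
      integral_rpow_mul_exp_neg_mul_Ioi h1 hc, Gamma_add_nat' ha m]
    simp only [hs]
    have e1 : (1/c:ℝ) ^ (a + (m:ℝ)) = (1/c) ^ a * ((1/c:ℝ)) ^ (m:ℕ) := by
      rw [← Real.rpow_natCast (1/c) m, ← Real.rpow_add (by positivity)]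
    have e2 : x ^ m = M ^ m * (1/c) ^ m := by
      rw [hxdef, div_eq_mul_inv, mul_pow, one_div]
    have h2 : poch a m ≠ 0 := (poch_pos ha m).ne'
    have h3 : (m.factorial : ℝ) ≠ 0 := by exact_mod_cast m.factorial_ne_zero
    rw [poch_nat_eq q m, e1, e2]
    field_simp
  -- norms
  have hnorm : ∀ m : ℕ, (∫ v in Set.Ioi (0:ℝ), ‖F m v‖) = ∫ v in Set.Ioi (0:ℝ), F m v := by
    intro m
    refine setIntegral_congr_fun measurableSet_Ioi fun v hv => ?_
    have hv0 : (0:ℝ) < v := hv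
    have h0 : 0 ≤ F m v := by
      have := hs_nonneg m
      simp only [hF]
      positivity
    exact Real.norm_of_nonneg h0
  have hchoose := hasSum_choose_mul_geometric_of_norm_lt_one (𝕜 := ℝ) q hx'
  have hsum : Summable fun m => ∫ v in Set.Ioi (0:ℝ), ‖F m v‖ := by
    simp only [hnorm, hval]
    exact hchoose.summable.mul_left _
  -- interchange
  have key : (∫ v in Set.Ioi (0:ℝ), v ^ (a - 1) * Real.exp (-c * v) * oneF1 (q+1 : ℕ) a (M * v))
      = ∑' m, ∫ v in Set.Ioi (0:ℝ), F m v := by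
    rw [integral_tsum_of_summable_integral_norm hFint hsum]
    refine setIntegral_congr_fun measurableSet_Ioi fun v hv => ?_
    have hv0 : (0:ℝ) < v := hv
    rw [oneF1, ← tsum_mul_left]
    refine tsum_congr fun m => ?_
    have hvm : v ^ (a + (m:ℝ) - 1) = v ^ (a - 1) * v ^ (m:ℕ) := by
      rw [← Real.rpow_natCast v m, ← Real.rpow_add hv0]
      ring_nf
    simp only [hF, hs, neg_mul]
    rw [hvm, mul_pow]
    ring
  rw [key]
  simp only [hval]
  rw [tsum_mul_left, hchoose.tsum_eq]
  -- final algebra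
  have h1x : 1 - x = (c - M) / c := by rw [hxdef]; field_simp
  have hca : (0:ℝ) < c ^ a := Real.rpow_pos_of_pos hc a
  rw [h1x, Real.rpow_sub hc, Real.rpow_neg hcM.le, Real.rpow_natCast, Real.rpow_natCast,
    one_div, Real.inv_rpow hc.le, div_pow]
  have hcp : (c:ℝ) ^ (q+1) ≠ 0 := by positivity
  have hcMp : (c - M) ^ (q+1) ≠ 0 := by positivity
  field_simp
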